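/- arXiv:1204.5214 — 2 statements merged into one kernel-verified Lean document; each statement's English description precedes it below -/
import Mathlib

section
/- Let A be a prime unital associative algebra over a field F and let e ∈ A be an idempotent with e ≠ 0, e ≠ 1, such that eAe = Fe, (1-e)A(1-e) = F(1-e), and eA(1-e)Ae ≠ 0. Then A contains a set of 2×2 matrix units {u_{ij} : i,j = 1,2} with u_11 = e, u_22 = 1-e, and A is isomorphic as an F-algebra to M_2(F). -/
/-- Auxiliary: a unital `F`-algebra with a complete set of `2×2` matrix units whose
`(0,0)`-corner is `F • u 0 0` is isomorphic to `M₂(F)`. -/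
lemma matrixUnits_equiv_M2 {F A : Type*} [Field F] [Ring A] [Algebra F A]
    (u : Fin 2 → Fin 2 → A)
    (hsum : u 0 0 + u 1 1 = 1)
    (hmul : ∀ i j k l : Fin 2, u i j * u k l = if j = k then u i l else 0)
    (hcorner : ∀ x : A, ∃ c : F, u 0 0 * x * u 0 0 = c • u 0 0)
    (hne : u 0 0 ≠ 0) :
    Nonempty (A ≃ₐ[F] Matrix (Fin 2) (Fin 2) F) := by
  let ψ : Matrix (Fin 2) (Fin 2) F →ₐ[F] A :=
  { toFun := fun M => ∑ i : Fin 2, ∑ j : Fin 2, M i j • u i j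
    map_one' := by
      simp [Fin.sum_univ_two, Matrix.one_apply, hsum]
    map_mul' := fun M N => by
      simp only [Matrix.mul_apply, Fin.sum_univ_two, add_mul, mul_add,
        smul_mul_smul_comm, hmul]
      simp only [Fin.isValue, one_ne_zero, zero_ne_one, if_true, if_false, reduceIte,
        smul_zero, add_zero, zero_add, add_smul, smul_smul]
      module
    map_zero' := by simp
    map_add' := fun M N => by
      simp only [Matrix.add_apply, Fin.sum_univ_two, add_smul]
      abel
    commutes' := fun r => by
      simp [Algebra.algebraMap_eq_smul_one, Fin.sum_univ_two, Matrix.one_apply, smul_smul,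
        ← hsum, smul_add] }
  have hψ : ∀ M : Matrix (Fin 2) (Fin 2) F,
      ψ M = ∑ i : Fin 2, ∑ j : Fin 2, M i j • u i j := fun _ => rfl
  have hbij : Function.Bijective ψ := by
    constructor
    · rw [injective_iff_map_eq_zero]
      intro M hM
      ext k l
      have h0 : u 0 k * ψ M * u l 0 = M k l • u 0 0 := by
        rw [hψ]
        fin_cases k <;> fin_cases l <;>
          simp only [Fin.sum_univ_two, mul_add, add_mul, mul_smul_comm, smul_mul_assoc,
            mul_assoc, hmul] <;>
          simp [hmul]
      rw [hM, mul_zero, zero_mul] at h0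
      have hMkl := (smul_eq_zero.mp h0.symm).resolve_right hne
      simpa using hMkl
    · intro a
      have key : ∀ i j : Fin 2, ∃ c : F, u 0 i * a * u j 0 = c • u 0 0 := by
        intro i j
        obtain ⟨c, hc⟩ := hcorner (u 0 i * a * u j 0)
        refine ⟨c, ?_⟩
        have e1 : u 0 0 * u 0 i = u 0 i := by simp [hmul]
        have e2 : u j 0 * u 0 0 = u j 0 := by simp [hmul]
        calc u 0 i * a * u j 0 = u 0 0 * (u 0 i * a * u j 0) * u 0 0 := by
              conv_rhs => rw [mul_assoc, mul_assoc (u 0 i * a), e2, ← mul_assoc, ← mul_assoc, e1]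
          _ = c • u 0 0 := hc
      choose c hc using key
      refine ⟨Matrix.of (fun i j => c i j), ?_⟩
      rw [hψ]
      have hterm : ∀ i j : Fin 2, u i 0 * (u 0 i * a * u j 0) * u 0 j = u i i * a * u j j := by
        intro i j
        have h1 : u i 0 * u 0 i = u i i := by simp [hmul]
        have h2 : u j 0 * u 0 j = u j j := by simp [hmul]
        rw [← h1, ← h2]
        noncomm_ring
      have expand : a = ∑ i : Fin 2, ∑ j : Fin 2, u i 0 * (u 0 i * a * u j 0) * u 0 j := by
        have h2 : (u 0 0 + u 1 1) * a * (u 0 0 + u 1 1)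
            = ∑ i : Fin 2, ∑ j : Fin 2, u i 0 * (u 0 i * a * u j 0) * u 0 j := by
          simp only [Fin.sum_univ_two, hterm]
          noncomm_ring
        rw [← h2, hsum, one_mul, mul_one]
      conv_rhs => rw [expand]
      refine Finset.sum_congr rfl fun i _ => Finset.sum_congr rfl fun j _ => ?_
      rw [hc i j]
      simp [mul_smul_comm, smul_mul_assoc, mul_assoc, hmul]
  exact ⟨(AlgEquiv.ofBijective ψ hbij).symm⟩

/-- Let `A` be a prime unital algebra over `F` with a nontrivial idempotent `e` such
that `eAe = Fe`, `(1-e)A(1-e) = F(1-e)` and `eA(1-e)Ae ≠ 0`. Then `A` contains a set of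
`2×2` matrix units with `u₁₁ = e`, `u₂₂ = 1-e`, and `A ≅ M₂(F)` as `F`-algebras. -/
theorem prime_with_small_corners_is_M2 {F A : Type*} [Field F] [Ring A] [Algebra F A]
    (hprime : ∀ a b : A, (∀ x : A, a * x * b = 0) → a = 0 ∨ b = 0)
    (e : A) (he : e * e = e) (he0 : e ≠ 0) (he1 : e ≠ 1)
    (hcorner0 : ∀ x : A, ∃ c : F, e * x * e = c • e)
    (hcorner1 : ∀ x : A, ∃ c : F, (1 - e) * x * (1 - e) = c • (1 - e))
    (hnz : ∃ a b : A, e * a * (1 - e) * b * e ≠ 0) :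
    (∃ u : Fin 2 → Fin 2 → A,
      u 0 0 = e ∧ u 1 1 = 1 - e ∧ u 0 0 + u 1 1 = 1 ∧
      ∀ i j k l : Fin 2, u i j * u k l = if j = k then u i l else 0) ∧
    Nonempty (A ≃ₐ[F] Matrix (Fin 2) (Fin 2) F) := by
  obtain ⟨a, b, hab⟩ := hnz
  have hf : (1 - e) * (1 - e) = 1 - e := by simp [sub_mul, mul_sub, he]
  have hef : e * (1 - e) = 0 := by simp [mul_sub, he]
  have hfe : (1 - e) * e = 0 := by simp [sub_mul, he]
  obtain ⟨c, hc⟩ := hcorner0 (a * (1 - e) * b)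
  have hc' : e * a * (1 - e) * b * e = c • e := by rw [← hc]; noncomm_ring
  have hcne : c ≠ 0 := by intro h; rw [h, zero_smul] at hc'; exact hab hc'
  set p : A := c⁻¹ • (e * a * (1 - e)) with hp
  set q : A := (1 - e) * b * e with hq
  have hep : e * p = p := by rw [hp, mul_smul_comm, ← mul_assoc, ← mul_assoc, he]
  have hpf : p * (1 - e) = p := by rw [hp, smul_mul_assoc, mul_assoc, hf]
  have hfq : (1 - e) * q = q := by rw [hq, ← mul_assoc, ← mul_assoc, hf]
  have hqe : q * e = q := by rw [hq, mul_assoc, mul_assoc, he, ← mul_assoc]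
  have hpe : p * e = 0 := by rw [← hpf, mul_assoc, hfe, mul_zero]
  have hfp : (1 - e) * p = 0 := by rw [← hep, ← mul_assoc, hfe, zero_mul]
  have heq : e * q = 0 := by rw [← hfq, ← mul_assoc, hef, zero_mul]
  have hqf : q * (1 - e) = 0 := by rw [← hqe, mul_assoc, hef, mul_zero]
  have hpq : p * q = e := by
    rw [hp, hq, smul_mul_assoc]
    have hkey : e * a * (1 - e) * ((1 - e) * b * e) = e * a * (1 - e) * b * e := by
      have h1 : (1 - e) * ((1 - e) * b * e) = (1 - e) * b * e := by
        rw [← mul_assoc, ← mul_assoc, hf]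
      calc e * a * (1 - e) * ((1 - e) * b * e)
          = e * a * ((1 - e) * ((1 - e) * b * e)) := by rw [mul_assoc]
        _ = e * a * ((1 - e) * b * e) := by rw [h1]
        _ = e * a * (1 - e) * b * e := by noncomm_ring
    rw [hkey, hc', smul_smul, inv_mul_cancel₀ hcne, one_smul]
  have hpp : p * p = 0 := by
    calc p * p = p * (e * p) := by rw [hep]
      _ = (p * e) * p := by rw [mul_assoc]
      _ = 0 := by rw [hpe, zero_mul]
  have hqq : q * q = 0 := by
    calc q * q = (q * e) * q := by rw [hqe]
      _ = q * (e * q) := by rw [mul_assoc]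
      _ = 0 := by rw [heq, mul_zero]
  have hfe0 : (1 : A) - e ≠ 0 := fun h => he1 (by rwa [sub_eq_zero, eq_comm] at h)
  have hqp : q * p = 1 - e := by
    obtain ⟨d, hd⟩ := hcorner1 (q * p)
    have hqp' : q * p = d • (1 - e) := by
      rw [← hd]
      have h1 : (1 - e) * (q * p) = q * p := by rw [← mul_assoc, hfq]
      have h2 : q * p * (1 - e) = q * p := by rw [mul_assoc, hpf]
      rw [h1, h2]
    have hidem : (q * p) * (q * p) = q * p := by
      calc (q * p) * (q * p) = q * (p * q) * p := by noncomm_ring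
        _ = q * e * p := by rw [hpq]
        _ = q * p := by rw [hqe]
    have hd2 : (d * d) • ((1 : A) - e) = d • ((1 : A) - e) := by
      calc (d * d) • ((1 : A) - e) = (d • ((1 : A) - e)) * (d • ((1 : A) - e)) := by
            rw [smul_mul_smul_comm, hf]
        _ = (q * p) * (q * p) := by rw [← hqp']
        _ = q * p := hidem
        _ = d • ((1 : A) - e) := hqp'
    have hsub : (d * d - d) • ((1 : A) - e) = 0 := by rw [sub_smul, hd2, sub_self]
    have hdd : d * d = d := by
      rcases smul_eq_zero.mp hsub with h | h
      · exact sub_eq_zero.mp h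
      · exact absurd h hfe0
    have hfac : d * (d - 1) = 0 := by linear_combination hdd
    rcases mul_eq_zero.mp hfac with h | h
    · exfalso
      rw [h, zero_smul] at hqp'
      have : e = 0 := by
        calc e = e * e := he.symm
          _ = (p * q) * (p * q) := by rw [hpq]
          _ = p * (q * p) * q := by noncomm_ring
          _ = 0 := by rw [hqp', mul_zero, zero_mul]
      exact he0 this
    · rw [hqp', sub_eq_zero.mp h, one_smul]
  set u : Fin 2 → Fin 2 → A := ![![e, p], ![q, 1 - e]] with hu
  have hu00 : u 0 0 = e := rfl
  have hu01 : u 0 1 = p := rfl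
  have hu10 : u 1 0 = q := rfl
  have hu11 : u 1 1 = 1 - e := rfl
  have hsum : u 0 0 + u 1 1 = 1 := by rw [hu00, hu11]; abel
  have hmul : ∀ i j k l : Fin 2, u i j * u k l = if j = k then u i l else 0 := by
    intro i j k l
    fin_cases i <;> fin_cases j <;> fin_cases k <;> fin_cases l <;>
      simp_all [hu, he, hf, hef, hfe, hep, hpf, hfq, hqe, hpe, hfp, heq, hqf,
        hpq, hqp, hpp, hqq]
  refine ⟨⟨u, hu00, hu11, hsum, hmul⟩, ?_⟩
  exact matrixUnits_equiv_M2 u hsum hmul (by rw [hu00]; exact hcorner0) (by rw [hu00]; exact he0)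
end

section
/- Let F be a field of characteristic ≠ 2 and let A = M(1|1) be the algebra of 2×2 matrices over F with grading: even part the diagonal matrices, odd part the off-diagonal matrices. The map φ sending the matrix with entries (x, y; z, w) to the matrix with entries (2x, 2y; z, x+w) is a Lie superautomorphism of A. -/
/-- The off-diagonal (odd) part of a `2×2` matrix. -/
def offPart {F : Type*} [Field F] (m : Matrix (Fin 2) (Fin 2) F) :
    Matrix (Fin 2) (Fin 2) F :=
  Matrix.of fun i j => if i = j then 0 else m i j

/-- The supercommutator on `M(1|1)` (2×2 matrices graded by diagonal/off-diagonal),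
obtained by bilinear extension of `[a,b]_s = ab - (-1)^{|a||b|} ba`; explicitly
`[a,b]_s = ab - ba + 2·b₁a₁` where `a₁, b₁` are the off-diagonal parts. -/
def m11Br {F : Type*} [Field F] (a b : Matrix (Fin 2) (Fin 2) F) :
    Matrix (Fin 2) (Fin 2) F :=
  a * b - b * a + (2 : F) • (offPart b * offPart a)

/-- The map sending `(x, y; z, w)` to `(2x, 2y; z, x+w)`. -/
def phiM11 {F : Type*} [Field F] (m : Matrix (Fin 2) (Fin 2) F) :
    Matrix (Fin 2) (Fin 2) F :=
  !![2 * m 0 0, 2 * m 0 1; m 1 0, m 0 0 + m 1 1]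

/-- Homogeneity of degree `i` in `M(1|1)`: degree `0` matrices are diagonal, degree `1`
matrices have zero diagonal. -/
def m11Homog {F : Type*} [Field F] (i : ZMod 2) (m : Matrix (Fin 2) (Fin 2) F) : Prop :=
  if i = 0 then (∀ p q : Fin 2, p ≠ q → m p q = 0) else (∀ p : Fin 2, m p p = 0)

/-- The map `(x, y; z, w) ↦ (2x, 2y; z, x+w)` is a Lie superautomorphism of `M(1|1)`:
it is linear, bijective, graded, and preserves the supercommutator. -/
theorem phiM11_is_lie_superautomorphism {F : Type*} [Field F] (h2 : (2 : F) ≠ 0) :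
    (∀ a b : Matrix (Fin 2) (Fin 2) F, phiM11 (a + b) = phiM11 a + phiM11 b) ∧
    (∀ (c : F) (a : Matrix (Fin 2) (Fin 2) F), phiM11 (c • a) = c • phiM11 a) ∧
    Function.Bijective (phiM11 (F := F)) ∧
    (∀ i : ZMod 2, ∀ m : Matrix (Fin 2) (Fin 2) F, m11Homog i m → m11Homog i (phiM11 m)) ∧
    (∀ a b : Matrix (Fin 2) (Fin 2) F, phiM11 (m11Br a b) = m11Br (phiM11 a) (phiM11 b)) := by
  refine ⟨?_, ?_, ?_, ?_, ?_⟩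
  · intro a b
    ext i j
    fin_cases i <;> fin_cases j <;>
      simp [phiM11, Matrix.add_apply] <;> ring
  · intro c a
    ext i j
    fin_cases i <;> fin_cases j <;>
      simp [phiM11, Matrix.smul_apply, smul_eq_mul] <;> ring
  · have hinv : Function.LeftInverse
        (fun m : Matrix (Fin 2) (Fin 2) F =>
          !![m 0 0 / 2, m 0 1 / 2; m 1 0, m 1 1 - m 0 0 / 2]) (phiM11 (F := F)) ∧
        Function.RightInverse
        (fun m : Matrix (Fin 2) (Fin 2) F =>
          !![m 0 0 / 2, m 0 1 / 2; m 1 0, m 1 1 - m 0 0 / 2]) (phiM11 (F := F)) := by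
      constructor <;> intro m <;> ext i j <;> fin_cases i <;> fin_cases j <;>
        simp [phiM11] <;> field_simp <;> ring
    exact ⟨hinv.1.injective, hinv.2.surjective⟩
  · intro i m hm
    unfold m11Homog at hm ⊢
    by_cases hi : i = 0
    · simp only [hi, if_true] at hm ⊢
      intro p q hpq
      fin_cases p <;> fin_cases q <;> simp_all [phiM11] <;>
        first
        | exact hm 0 1 (by decide)
        | exact hm 1 0 (by decide)
    · simp only [hi, if_false] at hm ⊢
      intro p
      fin_cases p <;> simp [phiM11, hm 0, hm 1]
  · intro a b
    ext i j
    fin_cases i <;> fin_cases j <;>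
      simp [phiM11, m11Br, offPart, Matrix.mul_apply, Fin.sum_univ_two,
        Matrix.add_apply, Matrix.sub_apply, Matrix.smul_apply, smul_eq_mul] <;> ring
end
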